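/- Let l, k > 0 and let v ∈ (0, k). Then the set E_v = {(x,y) ∈ ℝ² : k²x² + l²y² − 2l(k−2v)xy − 2lkv·x − 2l²v·y + l²v² = 0} is an ellipse (i.e. the image of the unit circle {p ∈ ℝ² : p.1² + p.2² = 1} under an invertible affine map of ℝ²), E_v is contained in the solid rectangle [0,l] × [0,k], and E_v meets each of the four sides of the rectangle in exactly one point, namely: the bottom side [(0,0),(l,0)] in (lv/k, 0), the left side [(0,0),(0,k)] in (0, v), the top side [(0,k),(l,k)] in ((l/k)(k−v), k), and the right side [(l,0),(l,k)] in (l, k−v). -/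

import Mathlib

set_option maxHeartbeats 1000000

noncomputable section


/-- The unit circle in `ℝ × ℝ`. -/
def unitCircle : Set (ℝ × ℝ) := {p : ℝ × ℝ | p.1 ^ 2 + p.2 ^ 2 = 1}

/-- A set is an ellipse if it is the image of the unit circle under an
invertible affine map of the plane. -/
def IsEllipse (E : Set (ℝ × ℝ)) : Prop :=
  ∃ f : (ℝ × ℝ) ≃ᵃ[ℝ] (ℝ × ℝ), E = (f : (ℝ × ℝ) → (ℝ × ℝ)) '' unitCircle

def lmapUT (a b d : ℝ) : (ℝ × ℝ) →ₗ[ℝ] (ℝ × ℝ) where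
  toFun p := (a * p.1 + b * p.2, d * p.2)
  map_add' p q := by simp [Prod.ext_iff]; constructor <;> ring
  map_smul' c p := by simp [Prod.ext_iff]; constructor <;> ring

def lequivUT (a b d : ℝ) (ha : a ≠ 0) (hd : d ≠ 0) : (ℝ × ℝ) ≃ₗ[ℝ] (ℝ × ℝ) :=
  LinearEquiv.ofLinear (lmapUT a b d) (lmapUT a⁻¹ (-b/(a*d)) d⁻¹)
    (by apply LinearMap.ext; intro p; simp [lmapUT, Prod.ext_iff]
        constructor <;> field_simp <;> ring)
    (by apply LinearMap.ext; intro p; simp [lmapUT, Prod.ext_iff]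
        constructor <;> field_simp <;> ring)

def aequivUT (a b d cx cy : ℝ) (ha : a ≠ 0) (hd : d ≠ 0) : (ℝ × ℝ) ≃ᵃ[ℝ] (ℝ × ℝ) :=
  (lequivUT a b d ha hd).toAffineEquiv.trans (AffineEquiv.constVAdd ℝ (ℝ × ℝ) (cx, cy))

theorem aequivUT_apply (a b d cx cy : ℝ) (ha : a ≠ 0) (hd : d ≠ 0) (p : ℝ × ℝ) :
    aequivUT a b d cx cy ha hd p = (cx + (a * p.1 + b * p.2), cy + d * p.2) := by
  simp [aequivUT, lequivUT, lmapUT, Prod.ext_iff]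

theorem stmt_0 (l k v : ℝ) (hl : 0 < l) (hk : 0 < k) (hv : v ∈ Set.Ioo (0 : ℝ) k)
    (E : Set (ℝ × ℝ))
    (hE : E = {p : ℝ × ℝ |
      k ^ 2 * p.1 ^ 2 + l ^ 2 * p.2 ^ 2 - 2 * l * (k - 2 * v) * p.1 * p.2
        - 2 * l * k * v * p.1 - 2 * l ^ 2 * v * p.2 + l ^ 2 * v ^ 2 = 0}) :
    IsEllipse E ∧
    E ⊆ Set.Icc (0 : ℝ) l ×ˢ Set.Icc (0 : ℝ) k ∧
    E ∩ segment ℝ (0, 0) (l, 0) = {(l * v / k, 0)} ∧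
    E ∩ segment ℝ (0, 0) (0, k) = {(0, v)} ∧
    E ∩ segment ℝ (0, k) (l, k) = {(l / k * (k - v), k)} ∧
    E ∩ segment ℝ (l, 0) (l, k) = {(l, k - v)} := by
  obtain ⟨hv0, hvk⟩ := hv
  have hk0 : k ≠ 0 := ne_of_gt hk
  have hl0 : l ≠ 0 := ne_of_gt hl
  have hkv : 0 < k - v := by linarith
  have hvkv : 0 < v * (k - v) := mul_pos hv0 hkv
  set s : ℝ := Real.sqrt (v * (k - v)) with hsdef
  have hs2 : s ^ 2 = v * (k - v) := Real.sq_sqrt hvkv.le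
  have hs : 0 < s := Real.sqrt_pos.mpr hvkv
  have ha : l * s / k ≠ 0 := by positivity
  have hd : k / 2 ≠ 0 := by positivity
  set f := aequivUT (l * s / k) (l * (k - 2 * v) / (2 * k)) (k / 2) (l / 2) (k / 2) ha hd
    with hf
  -- the key algebraic identity
  have key : ∀ q : ℝ × ℝ, f q ∈ E ↔ q ∈ unitCircle := by
    intro q
    have hx2 : 2 * k * (f q).1 = l * k + 2 * l * s * q.1 + l * (k - 2 * v) * q.2 := by
      rw [hf, aequivUT_apply]; field_simp; ring
    have hy2 : 2 * (f q).2 = k + k * q.2 := by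
      rw [hf, aequivUT_apply]; ring
    rw [hE]
    simp only [Set.mem_setOf_eq, unitCircle]
    set c1 := (f q).1
    set c2 := (f q).2
    set X := l * k + 2 * l * s * q.1 + l * (k - 2 * v) * q.2 with hX
    set Y := k + k * q.2 with hY
    constructor
    · intro h
      have h2 : 4 * k ^ 2 * (l ^ 2 * v * (k - v)) * (q.1 ^ 2 + q.2 ^ 2 - 1) = 0 := by
        linear_combination (4 * k ^ 2) * h
          - (k ^ 2 * (2 * k * c1 + X) - 2 * l * k * (k - 2 * v) * (2 * c2) - 4 * l * k ^ 2 * v) * hx2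
          - (k ^ 2 * l ^ 2 * (2 * c2 + Y) - 2 * l * k * (k - 2 * v) * X - 4 * k ^ 2 * l ^ 2 * v) * hy2
          - (4 * k ^ 2 * l ^ 2 * q.1 ^ 2) * hs2
      have hne : 4 * k ^ 2 * (l ^ 2 * v * (k - v)) ≠ 0 :=
        ne_of_gt (mul_pos (by positivity) (mul_pos (mul_pos (by positivity) hv0) hkv))
      have := (mul_eq_zero.mp h2).resolve_left hne
      linarith
    · intro h
      apply mul_left_cancel₀ (show (4:ℝ) * k ^ 2 ≠ 0 by positivity)
      rw [mul_zero]
      linear_combination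
          (k ^ 2 * (2 * k * c1 + X) - 2 * l * k * (k - 2 * v) * (2 * c2) - 4 * l * k ^ 2 * v) * hx2
        + (k ^ 2 * l ^ 2 * (2 * c2 + Y) - 2 * l * k * (k - 2 * v) * X - 4 * k ^ 2 * l ^ 2 * v) * hy2
        + (4 * k ^ 2 * l ^ 2 * q.1 ^ 2) * hs2 + (4 * k ^ 2 * l ^ 2 * v * (k - v)) * h
  have hEim : E = (f : (ℝ × ℝ) → (ℝ × ℝ)) '' unitCircle := by
    ext p
    constructor
    · intro hp
      refine ⟨f.symm p, ?_, f.apply_symm_apply p⟩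
      rw [← key]; rwa [f.apply_symm_apply]
    · rintro ⟨q, hq, rfl⟩
      exact (key q).mpr hq
  -- rectangle containment
  have hrect : E ⊆ Set.Icc (0 : ℝ) l ×ˢ Set.Icc (0 : ℝ) k := by
    intro p hp
    rw [hEim] at hp
    obtain ⟨q, hq, rfl⟩ := hp
    simp only [unitCircle, Set.mem_setOf_eq] at hq
    rw [hf, aequivUT_apply]
    have hcs : (2 * s * q.1 + (k - 2*v) * q.2) ^ 2 ≤ k ^ 2 := by
      nlinarith [sq_nonneg (2 * s * q.2 - (k - 2*v) * q.1)]
    have hb1 : -k ≤ 2 * s * q.1 + (k - 2*v) * q.2 := by nlinarith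
    have hb2 : 2 * s * q.1 + (k - 2*v) * q.2 ≤ k := by nlinarith
    have hq2 : q.2 ^ 2 ≤ 1 := by nlinarith [sq_nonneg q.1]
    have hq2' : -1 ≤ q.2 ∧ q.2 ≤ 1 := abs_le.mp (abs_le_one_iff_mul_self_le_one.mpr (by nlinarith))
    constructor
    · constructor
      · have : 0 ≤ l / (2*k) * (k + (2 * s * q.1 + (k - 2*v) * q.2)) :=
          mul_nonneg (by positivity) (by linarith)
        calc (0:ℝ) ≤ l / (2*k) * (k + (2 * s * q.1 + (k - 2*v) * q.2)) := this
          _ = l / 2 + (l * s / k * q.1 + l * (k - 2 * v) / (2 * k) * q.2) := by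
              field_simp
      · have h1 : l / 2 + (l * s / k * q.1 + l * (k - 2 * v) / (2 * k) * q.2)
            = l / (2*k) * (k + (2 * s * q.1 + (k - 2*v) * q.2)) := by field_simp
        rw [h1]
        have : l / (2*k) * (k + (2 * s * q.1 + (k - 2*v) * q.2)) ≤ l / (2*k) * (2*k) := by
          apply mul_le_mul_of_nonneg_left (by linarith) (by positivity)
        calc l / (2*k) * (k + (2 * s * q.1 + (k - 2*v) * q.2)) ≤ l / (2*k) * (2*k) := this
          _ = l := by field_simp
    · constructor
      · nlinarith [hq2'.1]
      · nlinarith [hq2'.2]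
  refine ⟨⟨f, hEim⟩, hrect, ?_, ?_, ?_, ?_⟩
  · -- bottom side
    ext p
    simp only [Set.mem_inter_iff, Set.mem_singleton_iff, segment_eq_image, Set.mem_image]
    constructor
    · rintro ⟨hpE, t, ht, hpt⟩
      rw [hE] at hpE
      simp only [Set.mem_setOf_eq] at hpE
      have hp1 : p.1 = t * l := by rw [← hpt]; simp
      have hp2 : p.2 = 0 := by rw [← hpt]; simp
      have hsq : (k * p.1 - l * v) ^ 2 = 0 := by
        rw [hp2] at hpE; linear_combination hpE
      have : k * p.1 - l * v = 0 := by
        have h2 : (2:ℕ) ≠ 0 := by norm_num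
        exact (pow_eq_zero_iff h2).mp hsq
      have : p.1 = l * v / k := by field_simp; linarith
      exact Prod.ext (by simpa using this) (by simpa using hp2)
    · rintro rfl
      refine ⟨?_, v / k, ⟨by positivity, by rw [div_le_one hk]; linarith⟩, ?_⟩
      · rw [hE]; simp only [Set.mem_setOf_eq]; field_simp; ring
      · simp [Prod.ext_iff]; field_simp
  · -- left side
    ext p
    simp only [Set.mem_inter_iff, Set.mem_singleton_iff, segment_eq_image, Set.mem_image]
    constructor
    · rintro ⟨hpE, t, ht, hpt⟩
      rw [hE] at hpE
      simp only [Set.mem_setOf_eq] at hpE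
      have hp1 : p.1 = 0 := by rw [← hpt]; simp
      have hsq : (l * (p.2 - v)) ^ 2 = 0 := by
        rw [hp1] at hpE; linear_combination hpE
      have h0 : l * (p.2 - v) = 0 := by nlinarith [sq_nonneg (l * (p.2 - v))]
      have : p.2 = v := by
        rcases mul_eq_zero.mp h0 with h | h
        · exact absurd h hl0
        · linarith
      exact Prod.ext (by simpa using hp1) (by simpa using this)
    · rintro rfl
      refine ⟨?_, v / k, ⟨by positivity, by rw [div_le_one hk]; linarith⟩, ?_⟩
      · rw [hE]; simp only [Set.mem_setOf_eq]; ring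
      · simp [Prod.ext_iff]; field_simp
  · -- top side
    ext p
    simp only [Set.mem_inter_iff, Set.mem_singleton_iff, segment_eq_image, Set.mem_image]
    constructor
    · rintro ⟨hpE, t, ht, hpt⟩
      rw [hE] at hpE
      simp only [Set.mem_setOf_eq] at hpE
      have hp2 : p.2 = k := by rw [← hpt]; simp; ring
      have hsq : (k * p.1 - l * (k - v)) ^ 2 = 0 := by
        rw [hp2] at hpE; linear_combination hpE
      have h0 : k * p.1 - l * (k - v) = 0 := by nlinarith [sq_nonneg (k * p.1 - l * (k - v))]
      have : p.1 = l / k * (k - v) := by field_simp; linarith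
      exact Prod.ext (by simpa using this) (by simpa using hp2)
    · rintro rfl
      refine ⟨?_, (k - v) / k, ⟨by positivity, by rw [div_le_one hk]; linarith⟩, ?_⟩
      · rw [hE]; simp only [Set.mem_setOf_eq]; field_simp; ring
      · simp [Prod.ext_iff]; constructor
        · field_simp
        · ring
  · -- right side
    ext p
    simp only [Set.mem_inter_iff, Set.mem_singleton_iff, segment_eq_image, Set.mem_image]
    constructor
    · rintro ⟨hpE, t, ht, hpt⟩
      rw [hE] at hpE
      simp only [Set.mem_setOf_eq] at hpE
      have hp1 : p.1 = l := by rw [← hpt]; simp; ring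
      have hsq : (l * (p.2 - (k - v))) ^ 2 = 0 := by
        rw [hp1] at hpE; linear_combination hpE
      have h0 : l * (p.2 - (k - v)) = 0 := by nlinarith [sq_nonneg (l * (p.2 - (k - v)))]
      have : p.2 = k - v := by
        rcases mul_eq_zero.mp h0 with h | h
        · exact absurd h hl0
        · linarith
      exact Prod.ext (by simpa using hp1) (by simpa using this)
    · rintro rfl
      refine ⟨?_, (k - v) / k, ⟨by positivity, by rw [div_le_one hk]; linarith⟩, ?_⟩
      · rw [hE]; simp only [Set.mem_setOf_eq]; ring
      · simp [Prod.ext_iff]; constructor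
        · ring
        · field_simp

end
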